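/- Let c > 0, 0 ≤ r < s, a, b ∈ ℝ with |b - a| ≤ c(s - r), u = (r+s)/2, and let d lie in the midpoint interval [max(a,b) - c(s-r)/2, min(a,b) + c(s-r)/2]. Then P^{s,b}_{u,d} is nonempty and P^{s,b}_{u,d} ⊆ P^{s,b}_{r,a}. -/
import Mathlib

/-- The "parallelogram" `P^{q,β}_{p,α}`: intersection of the forward Lipschitz cone at
`(p, α)` and the backward Lipschitz cone at `(q, β)`. -/
def para (c p q α β : ℝ) : Set (ℝ × ℝ) :=
  {z : ℝ × ℝ | p ≤ z.1 ∧ z.1 ≤ q ∧ |z.2 - α| ≤ c * (z.1 - p) ∧ |z.2 - β| ≤ c * (q - z.1)}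

theorem stmt_5 (c r s a b u d : ℝ) (hc : 0 < c) (hr : 0 ≤ r) (hrs : r < s)
    (hL : |b - a| ≤ c * (s - r)) (hu : u = (r + s) / 2)
    (hd : d ∈ Set.Icc (max a b - c * (s - r) / 2) (min a b + c * (s - r) / 2)) :
    (para c u s d b).Nonempty ∧ para c u s d b ⊆ para c r s a b := by
  obtain ⟨hd1, hd2⟩ := hd
  have hda : |d - a| ≤ c * (s - r) / 2 := by
    rw [abs_le]
    constructor
    · have := le_max_left a b; linarith
    · have := min_le_left a b; linarith
  have hdb : |d - b| ≤ c * (s - r) / 2 := by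
    rw [abs_le]
    constructor
    · have := le_max_right a b; linarith
    · have := min_le_right a b; linarith
  constructor
  · refine ⟨(s, b), ?_, le_refl _, ?_, ?_⟩
    · simp [hu]; linarith
    · have : |(b : ℝ) - d| = |d - b| := abs_sub_comm _ _
      simp only [this]
      have : c * (s - u) = c * (s - r) / 2 := by rw [hu]; ring
      simpa [this] using hdb
    · simp
  · rintro ⟨t, x⟩ ⟨h1, h2, h3, h4⟩
    refine ⟨by linarith [h1, hu.le], h2, ?_, h4⟩
    calc |x - a| ≤ |x - d| + |d - a| := abs_sub_le _ _ _
      _ ≤ c * (t - u) + c * (s - r) / 2 := add_le_add h3 hda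
      _ = c * (t - r) := by rw [hu]; ring
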